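/- Let γ : [0,L] → ℝ² be a continuously differentiable curve parameterized by arc length with tangent indicatrix ϑ : [0,L] → ℝ (i.e., γ'(s) = (cos ϑ(s), sin ϑ(s)) with ϑ continuous). Then γ belongs to the class K⁺ (meaning: for every s ∈ [0,L) there exists H > 0 such that for all h ∈ [0,H], ⟨γ'(s+h) − γ'(s), n(s)⟩ ≤ h, where n(s) = (−γ_y'(s), γ_x'(s))) if and only if for all p ∈ [0,L) and all q ∈ [p,L], ϑ(q) − ϑ(p) ≤ q − p. -/

import Mathlib

/-- The Euclidean dot product of two points of the plane `ℂ ≅ ℝ²`. -/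
def dot (z w : ℂ) : ℝ := z.re * w.re + z.im * w.im

lemma dot_sin (α β : ℝ) :
    dot (((Real.cos β : ℂ) + (Real.sin β : ℂ) * Complex.I)
        - ((Real.cos α : ℂ) + (Real.sin α : ℂ) * Complex.I))
      (Complex.I * ((Real.cos α : ℂ) + (Real.sin α : ℂ) * Complex.I))
      = Real.sin (β - α) := by
  simp only [dot, Complex.sub_re, Complex.sub_im, Complex.add_re, Complex.add_im,
    Complex.mul_re, Complex.mul_im, Complex.I_re, Complex.I_im,
    Complex.ofReal_re, Complex.ofReal_im, Real.sin_sub]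
  ring

lemma aux_sin (ε : ℝ) (hε : 0 < ε) :
    ∃ δ > 0, ∀ h : ℝ, 0 ≤ h → h ≤ δ →
      h ≤ Real.sin ((1 + ε) * h) ∧ (1 + ε) * h ≤ Real.pi / 2 := by
  have h1ε : (0:ℝ) < 1 + ε := by linarith
  refine ⟨min (1 / (1 + ε)) (Real.sqrt (4 * ε / (1 + ε) ^ 3)), ?_, ?_⟩
  · have : (0:ℝ) < 4 * ε / (1 + ε) ^ 3 := by positivity
    exact lt_min (by positivity) (Real.sqrt_pos.2 this)
  · intro h h0 hδ
    have hx1 : (1 + ε) * h ≤ 1 := by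
      have := hδ.trans (min_le_left _ _)
      rw [le_div_iff₀ h1ε] at this
      linarith [this]
    have hpi : (1 + ε) * h ≤ Real.pi / 2 := by
      have := Real.pi_gt_three
      linarith
    refine ⟨?_, hpi⟩
    rcases eq_or_lt_of_le h0 with rfl | h0'
    · simp
    · have hx0 : 0 < (1 + ε) * h := by positivity
      have hcube : (1 + ε) * h - ((1 + ε) * h) ^ 3 / 4 < Real.sin ((1 + ε) * h) := by
        have := Real.sin_gt_sub_cube hx0; linarith [pow_pos hx0 3]
      -- h^2 ≤ 4ε/(1+ε)^3
      have hsq : h ^ 2 ≤ 4 * ε / (1 + ε) ^ 3 := by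
        have h2 := hδ.trans (min_le_right _ _)
        have hnn : (0:ℝ) ≤ 4 * ε / (1 + ε) ^ 3 := by positivity
        nlinarith [Real.sq_sqrt hnn, Real.sqrt_nonneg (4 * ε / (1 + ε) ^ 3)]
      have key : (1 + ε) * h - ((1 + ε) * h) ^ 3 / 4 ≥ h := by
        have h3 : h ^ 2 * (1 + ε) ^ 3 ≤ 4 * ε :=
          (le_div_iff₀ (by positivity)).1 hsq
        nlinarith [mul_le_mul_of_nonneg_right h3 h0'.le]
      linarith

theorem stmt3 (L : ℝ) (hL : 0 < L) (γ : ℝ → ℂ) (ϑ : ℝ → ℝ)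
    (hϑc : ContinuousOn ϑ (Set.Icc 0 L))
    (hderiv : ∀ s ∈ Set.Icc (0 : ℝ) L,
      HasDerivAt γ ((Real.cos (ϑ s) : ℝ) + (Real.sin (ϑ s) : ℝ) * Complex.I) s) :
    ((∀ s ∈ Set.Ico (0 : ℝ) L, ∃ H > (0 : ℝ), ∀ h ∈ Set.Icc (0 : ℝ) H, s + h ≤ L →
        dot (deriv γ (s + h) - deriv γ s) (Complex.I * deriv γ s) ≤ h)
      ↔ (∀ p ∈ Set.Ico (0 : ℝ) L, ∀ q ∈ Set.Icc p L, ϑ q - ϑ p ≤ q - p)) := by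
  have hd : ∀ t ∈ Set.Icc (0:ℝ) L,
      deriv γ t = (Real.cos (ϑ t) : ℂ) + (Real.sin (ϑ t) : ℂ) * Complex.I :=
    fun t ht => (hderiv t ht).deriv
  have hdot : ∀ s ∈ Set.Icc (0:ℝ) L, ∀ t ∈ Set.Icc (0:ℝ) L,
      dot (deriv γ t - deriv γ s) (Complex.I * deriv γ s) = Real.sin (ϑ t - ϑ s) := by
    intro s hs t ht
    rw [hd s hs, hd t ht, dot_sin]
  constructor
  · -- K⁺ ⇒ Lipschitz-type bound
    intro hA p hp q hq
    have hp0 : (0:ℝ) ≤ p := hp.1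
    have hpq : p ≤ q := hq.1
    have hqL : q ≤ L := hq.2
    -- key claim with ε
    have key : ∀ ε > (0:ℝ), ϑ q - ϑ p ≤ (1 + ε) * (q - p) := by
      intro ε hε
      obtain ⟨δ, hδ0, hδ⟩ := aux_sin ε hε
      set C : Set ℝ := {u ∈ Set.Icc (0:ℝ) L | ϑ u ≤ ϑ p + (1 + ε) * (u - p)} with hCdef
      have hCclosed : IsClosed C := by
        have : C = Set.Icc (0:ℝ) L ∩
            {u | ϑ u - (ϑ p + (1 + ε) * (u - p)) ≤ 0} := by
          ext u; simp [hCdef, sub_nonpos]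
        rw [this]
        have hcont : ContinuousOn (fun u => ϑ u - (ϑ p + (1 + ε) * (u - p)))
            (Set.Icc (0:ℝ) L) := by
          exact hϑc.sub (by fun_prop)
        exact hcont.preimage_isClosed_of_isClosed isClosed_Icc
          isClosed_Iic
      set S : Set ℝ := {t | t ∈ Set.Icc p q ∧ Set.Icc p t ⊆ C} with hSdef
      have hpC : p ∈ C := ⟨⟨hp0, le_trans hpq hqL⟩, by simp⟩
      have hpS : p ∈ S := by
        refine ⟨⟨le_refl p, hpq⟩, ?_⟩
        intro u hu
        have : u = p := le_antisymm hu.2 hu.1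
        rwa [this]
      have hSne : S.Nonempty := ⟨p, hpS⟩
      have hSbdd : BddAbove S := ⟨q, fun t ht => ht.1.2⟩
      set T := sSup S with hTdef
      have hpT : p ≤ T := le_csSup hSbdd hpS
      have hTq : T ≤ q := csSup_le hSne fun t ht => ht.1.2
      have hT0 : (0:ℝ) ≤ T := le_trans hp0 hpT
      have hTL : T ≤ L := le_trans hTq hqL
      have hIcoC : Set.Ico p T ⊆ C := by
        intro u hu
        obtain ⟨t, htS, hut⟩ := exists_lt_of_lt_csSup hSne hu.2
        exact htS.2 ⟨hu.1, hut.le⟩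
      have hIccC : Set.Icc p T ⊆ C := by
        rcases eq_or_lt_of_le hpT with heq | hlt
        · intro u hu
          have hup : u ≤ p := by rw [heq]; exact hu.2
          have : u = p := le_antisymm hup hu.1
          rwa [this]
        · have hcl : closure (Set.Ico p T) = Set.Icc p T := closure_Ico hlt.ne
          rw [← hcl]
          calc closure (Set.Ico p T) ⊆ closure C := closure_mono hIcoC
            _ = C := hCclosed.closure_eq
      have hTC : T ∈ C := hIccC ⟨hpT, le_refl T⟩
      -- show T = q
      have hTeq : T = q := by
        by_contra hne
        have hTltq : T < q := lt_of_le_of_ne hTq hne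
        have hTIco : T ∈ Set.Ico (0:ℝ) L := ⟨hT0, lt_of_lt_of_le hTltq hqL⟩
        obtain ⟨H, hH0, hloc⟩ := hA T hTIco
        -- continuity at T
        have hcT : ContinuousWithinAt ϑ (Set.Icc 0 L) T := hϑc T ⟨hT0, hTL⟩
        rw [Metric.continuousWithinAt_iff] at hcT
        obtain ⟨δ₁, hδ₁0, hδ₁⟩ := hcT 1 one_pos
        set H' := min (min H δ) (min (δ₁ / 2) (q - T)) with hH'def
        have hH'0 : 0 < H' := by
          apply lt_min (lt_min hH0 hδ0) (lt_min (by linarith) (by linarith))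
        have hH'H : H' ≤ H := le_trans (min_le_left _ _) (min_le_left _ _)
        have hH'δ : H' ≤ δ := le_trans (min_le_left _ _) (min_le_right _ _)
        have hH'δ₁ : H' ≤ δ₁ / 2 := le_trans (min_le_right _ _) (min_le_left _ _)
        have hH'q : H' ≤ q - T := le_trans (min_le_right _ _) (min_le_right _ _)
        have hmem : T + H' ∈ S := by
          refine ⟨⟨by linarith, by linarith⟩, ?_⟩
          intro u hu
          rcases le_or_gt u T with huT | huT
          · exact hIccC ⟨hu.1, huT⟩
          · set h := u - T with hhdef
            clear_value h
            have hh0 : 0 < h := by simp [hhdef]; linarith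
            have hhH' : h ≤ H' := by simp [hhdef]; linarith [hu.2]
            have huL : u ≤ L := by linarith [hu.2, hH'q]
            have hu0 : (0:ℝ) ≤ u := le_trans hp0 hu.1
            have huIcc : u ∈ Set.Icc (0:ℝ) L := ⟨hu0, huL⟩
            have hsin : Real.sin (ϑ u - ϑ T) ≤ h := by
              have := hloc h ⟨hh0.le, le_trans hhH' hH'H⟩ (by
                show T + h ≤ L; rw [hhdef]; linarith)
              rwa [show T + h = u by rw [hhdef]; ring,
                hdot T ⟨hT0, hTL⟩ u huIcc] at this
            have hΔsmall : |ϑ u - ϑ T| < 1 := by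
              have := hδ₁ huIcc (by
                rw [Real.dist_eq, ← hhdef, abs_of_pos hh0]
                linarith)
              rwa [Real.dist_eq] at this
            have hTb : ϑ T ≤ ϑ p + (1 + ε) * (T - p) := hTC.2
            have hΔle : ϑ u - ϑ T ≤ (1 + ε) * h := by
              rcases le_or_gt (ϑ u - ϑ T) 0 with hΔ0 | hΔ0
              · have : (0:ℝ) < (1 + ε) * h := by positivity
                linarith
              · by_contra hcon
                push_neg at hcon
                obtain ⟨hs1, hs2⟩ := hδ h hh0.le (le_trans hhH' hH'δ)
                have hsinle : Real.sin (ϑ u - ϑ T) ≤ Real.sin ((1 + ε) * h) :=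
                  le_trans hsin hs1
                have hpos : (0:ℝ) ≤ (1 + ε) * h := by positivity
                have hpi3 := Real.pi_gt_three
                have habs := abs_lt.1 hΔsmall
                have hm1 : (1 + ε) * h ∈ Set.Icc (-(Real.pi/2)) (Real.pi/2) :=
                  Set.mem_Icc.mpr ⟨by linarith, hs2⟩
                have hm2 : ϑ u - ϑ T ∈ Set.Icc (-(Real.pi/2)) (Real.pi/2) :=
                  Set.mem_Icc.mpr ⟨by linarith [habs.1], by linarith [habs.2]⟩
                have hmono := Real.strictMonoOn_sin hm1 hm2 hcon
                linarith
            refine ⟨huIcc, ?_⟩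
            have : u - p = (T - p) + h := by rw [hhdef]; ring
            rw [this]
            have hexp : (1 + ε) * ((T - p) + h) = (1 + ε) * (T - p) + (1 + ε) * h := by
              ring
            rw [hexp]
            linarith
        have : T + H' ≤ T := le_csSup hSbdd hmem
        linarith
      have hqC : q ∈ C := hTeq ▸ hTC
      linarith [hqC.2]
    -- conclude
    rcases eq_or_lt_of_le hpq with rfl | hlt
    · have := key 1 one_pos; linarith
    · refine le_of_forall_pos_le_add fun η hη => ?_
      have := key (η / (q - p)) (div_pos hη (by linarith))
      have hne : q - p ≠ 0 := by linarith
      calc ϑ q - ϑ p ≤ (1 + η / (q - p)) * (q - p) := this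
        _ = (q - p) + η := by field_simp
  · -- Lipschitz-type bound ⇒ K⁺
    intro hB s hs
    have hs0 : (0:ℝ) ≤ s := hs.1
    have hsL : s ≤ L := hs.2.le
    have hcS : ContinuousWithinAt ϑ (Set.Icc 0 L) s := hϑc s ⟨hs0, hsL⟩
    rw [Metric.continuousWithinAt_iff] at hcS
    obtain ⟨δ₁, hδ₁0, hδ₁⟩ := hcS 3 (by norm_num)
    refine ⟨δ₁ / 2, by linarith, ?_⟩
    intro h hh hsh
    have hh0 : (0:ℝ) ≤ h := hh.1
    have hshIcc : s + h ∈ Set.Icc (0:ℝ) L := ⟨by linarith, hsh⟩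
    rw [hdot s ⟨hs0, hsL⟩ (s + h) hshIcc]
    have hΔle : ϑ (s + h) - ϑ s ≤ h := by
      have := hB s hs (s + h) ⟨by linarith, hsh⟩
      linarith
    rcases le_or_gt 0 (ϑ (s + h) - ϑ s) with hΔ0 | hΔ0
    · exact le_trans (Real.sin_le hΔ0) hΔle
    · have hΔlb : -3 < ϑ (s + h) - ϑ s := by
        have := hδ₁ hshIcc (by
          rw [Real.dist_eq]
          have : |s + h - s| = h := by rw [show s + h - s = h by ring, abs_of_nonneg hh0]
          rw [this]; linarith [hh.2])
        rw [Real.dist_eq] at this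
        linarith [abs_lt.1 this |>.1]
      have : Real.sin (ϑ (s + h) - ϑ s) ≤ 0 :=
        Real.sin_nonpos_of_nonpos_of_neg_pi_le hΔ0.le
          (by linarith [Real.pi_gt_three])
      linarith
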